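/- Let Π be a permutation matrix on ℂ^d with disjoint cycles Π₀ and Π₁ of equal length d₀ = d₁ and supports Ω₀ ∋ l₀ and Ω₁ ∋ l₁. Suppose U₁ is a unitary on ℂ^d commuting with Π and satisfying U₁|l₀⟩ = e^{iφ}|l₁⟩ for some real φ. Then U₁ maps the span of {|k⟩ : k ∈ Ω₀} bijectively onto the span of {|k⟩ : k ∈ Ω₁}; in fact U₁ = e^{iφ} Σ_{j=0}^{d₀-1} Π₁^j |l₁⟩⟨l₀| (Π₀†)^j + W where W annihilates all basis vectors indexed by Ω₀ and W† annihilates all basis vectors indexed by Ω₁. -/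

import Mathlib

open Matrix Finset

private lemma ppa_aux {d : ℕ} (π : Equiv.Perm (Fin d)) (a b : ℕ) (x : Fin d) :
    (π ^ (a + b)) x = (π ^ a) ((π ^ b) x) := by
  rw [pow_add]; rfl

private lemma ppm_aux {d : ℕ} (π : Equiv.Perm (Fin d)) (x : Fin d) {n : ℕ}
    (hn : (π ^ n) x = x) (m : ℕ) : (π ^ m) x = (π ^ (m % n)) x := by
  conv_lhs => rw [← Nat.div_add_mod m n]
  generalize m / n = q
  induction q with
  | zero => simp
  | succ q ih =>
    have h : n * (q + 1) + m % n = (n * q + m % n) + n := by ring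
    rw [h, ppa_aux, hn, ih]

private lemma ppc_aux {d : ℕ} (π : Equiv.Perm (Fin d)) (x : Fin d) (a b : ℕ)
    (h : (π ^ a) ((π ^ b) x) = (π ^ b) x) : (π ^ a) x = x := by
  have h2 : (π ^ b) ((π ^ a) x) = (π ^ b) x := by
    rw [← ppa_aux, Nat.add_comm, ppa_aux, h]
  exact (π ^ b).injective h2

private lemma orbit_facts {d : ℕ} (π : Equiv.Perm (Fin d)) (x : Fin d)
    (Ω : Finset (Fin d)) (d₀ : ℕ) (hcard : Ω.card = d₀) (hpos : 0 < d₀)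
    (hcyc : ∀ k, k ∈ Ω ↔ ∃ m : ℕ, (π ^ m) x = k) :
    (π ^ d₀) x = x ∧ (∀ j j', j < d₀ → j' < d₀ → (π ^ j) x = (π ^ j') x → j = j') := by
  have h1 : ∀ n, 0 < n → (π ^ n) x = x → d₀ ≤ n := by
    intro n hn hfix
    have hsub : Ω ⊆ (Finset.range n).image (fun j => (π ^ j) x) := by
      intro k hk
      obtain ⟨m, hm⟩ := (hcyc k).1 hk
      exact Finset.mem_image.2 ⟨m % n, Finset.mem_range.2 (Nat.mod_lt _ hn),
        by rw [← ppm_aux π x hfix m, hm]⟩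
    calc d₀ = Ω.card := hcard.symm
      _ ≤ ((Finset.range n).image (fun j => (π ^ j) x)).card := Finset.card_le_card hsub
      _ ≤ n := Finset.card_image_le.trans (by simp)
  have hinj : ∀ j j', j < d₀ → j' < d₀ → (π ^ j) x = (π ^ j') x → j = j' := by
    have hstep : ∀ j j', j < j' → j' < d₀ → (π ^ j) x ≠ (π ^ j') x := by
      intro j j' hlt hj' heq
      have h3 : (π ^ (j' - j)) ((π ^ j) x) = (π ^ j) x := by
        rw [← ppa_aux, Nat.sub_add_cancel hlt.le, ← heq]
      have h4 := ppc_aux π x _ _ h3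
      have := h1 _ (Nat.sub_pos_of_lt hlt) h4
      omega
    intro j j' hj hj' heq
    rcases lt_trichotomy j j' with h | h | h
    · exact absurd heq (hstep _ _ h hj')
    · exact h
    · exact absurd heq.symm (hstep _ _ h hj)
  refine ⟨?_, hinj⟩
  have himg : (Finset.range d₀).image (fun j => (π ^ j) x) = Ω := by
    apply Finset.eq_of_subset_of_card_le
    · intro k hk
      obtain ⟨j, _, rfl⟩ := Finset.mem_image.1 hk
      exact (hcyc _).2 ⟨j, rfl⟩
    · rw [hcard, Finset.card_image_of_injOn, Finset.card_range]
      intro j hj j' hj' heq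
      exact hinj j j' (Finset.mem_range.1 hj) (Finset.mem_range.1 hj') heq
  have hmem : (π ^ d₀) x ∈ Ω := (hcyc _).2 ⟨d₀, rfl⟩
  rw [← himg] at hmem
  obtain ⟨j, hj, hjx⟩ := Finset.mem_image.1 hmem
  rw [Finset.mem_range] at hj
  rcases Nat.eq_zero_or_pos j with rfl | hjpos
  · simpa using hjx.symm
  · exfalso
    have h3 : (π ^ (d₀ - j)) ((π ^ j) x) = (π ^ j) x := by
      rw [← ppa_aux, Nat.sub_add_cancel hj.le, hjx]
    have h4 := ppc_aux π x _ _ h3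
    have := h1 _ (by omega) h4
    omega

private lemma sum_mulVec' {m n : Type*} [Fintype n] {ι : Type*} (s : Finset ι)
    (A : ι → Matrix m n ℂ) (v : n → ℂ) :
    (∑ j ∈ s, A j) *ᵥ v = ∑ j ∈ s, (A j) *ᵥ v := by
  ext i
  simp [Matrix.mulVec, dotProduct, Matrix.sum_apply, Finset.sum_mul]
  rw [Finset.sum_comm]

private lemma vecMulVec_mulVec' {m n : Type*} [Fintype n] (u : m → ℂ) (v w : n → ℂ) :
    Matrix.vecMulVec u v *ᵥ w = (v ⬝ᵥ w) • u := by
  ext i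
  simp [Matrix.mulVec, Matrix.vecMulVec_apply, dotProduct, Finset.sum_mul,
    Finset.sum_mul]
  exact Finset.sum_congr rfl fun j _ => by ring

private lemma sum_pick {d : ℕ} (π : Equiv.Perm (Fin d)) (x y : Fin d) {d₀ : ℕ}
    (hpos : 0 < d₀) (hx : (π ^ d₀) x = x) (hy : (π ^ d₀) y = y)
    (hinj : ∀ j j', j < d₀ → j' < d₀ → (π ^ j) x = (π ^ j') x → j = j') (m : ℕ) :
    ∑ j ∈ Finset.range d₀, (if (π ^ j) x = (π ^ m) x then (1 : ℂ) else 0) •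
        (Pi.single ((π ^ j) y) (1 : ℂ) : Fin d → ℂ) = Pi.single ((π ^ m) y) 1 := by
  rw [Finset.sum_eq_single (m % d₀)]
  · rw [if_pos (by rw [ppm_aux π x hx m]), one_smul, ← ppm_aux π y hy m]
  · intro j hj hne
    rw [Finset.mem_range] at hj
    rw [if_neg, zero_smul]
    intro heq
    rw [ppm_aux π x hx m] at heq
    exact hne (hinj j (m % d₀) hj (Nat.mod_lt _ hpos) heq)
  · intro h
    exact absurd (Finset.mem_range.2 (Nat.mod_lt _ hpos)) h


/-- Let `P` be a permutation matrix on `ℂ^d` whose permutation `π` has two disjoint cycles of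
equal length `d₀ = d₁` with supports `Ω₀ ∋ l₀` and `Ω₁ ∋ l₁`. If a unitary `U₁` commutes with
`P` and satisfies `U₁|l₀⟩ = e^{iφ}|l₁⟩`, then `U₁` maps the span of the basis vectors indexed
by `Ω₀` bijectively onto the span of those indexed by `Ω₁`; in fact
`U₁ = e^{iφ} Σ_{j<d₀} |π^j l₁⟩⟨π^j l₀| + W` where `W` annihilates all basis vectors indexed
by `Ω₀` and `W†` annihilates all basis vectors indexed by `Ω₁`. -/
theorem stmt_8 {d : ℕ}
    (π : Equiv.Perm (Fin d)) (P : Matrix (Fin d) (Fin d) ℂ)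
    (hP : ∀ i j : Fin d, P i j = if i = π j then 1 else 0)
    (Ω₀ Ω₁ : Finset (Fin d)) (hdisj : Disjoint Ω₀ Ω₁)
    (d₀ : ℕ) (hd₀ : Ω₀.card = d₀) (hd₁ : Ω₁.card = d₀) (hd₀pos : 0 < d₀)
    (l₀ l₁ : Fin d) (hl₀ : l₀ ∈ Ω₀) (hl₁ : l₁ ∈ Ω₁)
    (hcyc₀ : ∀ k, k ∈ Ω₀ ↔ ∃ m : ℕ, (π ^ m) l₀ = k)
    (hcyc₁ : ∀ k, k ∈ Ω₁ ↔ ∃ m : ℕ, (π ^ m) l₁ = k)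
    (U₁ : Matrix (Fin d) (Fin d) ℂ)
    (hU₁ : U₁ ∈ Matrix.unitaryGroup (Fin d) ℂ)
    (hcomm : U₁ * P = P * U₁)
    (φ : ℝ)
    (htransfer : U₁.mulVec (Pi.single l₀ 1) =
      Complex.exp (Complex.I * φ) • (Pi.single l₁ 1 : Fin d → ℂ)) :
    (Submodule.map U₁.mulVecLin
        (Submodule.span ℂ ((fun k => Pi.single k (1 : ℂ)) '' (Ω₀ : Set (Fin d)))) =
      Submodule.span ℂ ((fun k => Pi.single k (1 : ℂ)) '' (Ω₁ : Set (Fin d)))) ∧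
    ∃ W : Matrix (Fin d) (Fin d) ℂ,
      U₁ = Complex.exp (Complex.I * φ) •
          (∑ j ∈ Finset.range d₀,
            Matrix.vecMulVec (Pi.single ((π ^ j) l₁) (1 : ℂ))
              (Pi.single ((π ^ j) l₀) (1 : ℂ))) + W ∧
      (∀ k ∈ Ω₀, W.mulVec (Pi.single k 1) = 0) ∧
      (∀ k ∈ Ω₁, W.conjTranspose.mulVec (Pi.single k 1) = 0) := by
  set c : ℂ := Complex.exp (Complex.I * φ) with hc_def
  have hc : c ≠ 0 := Complex.exp_ne_zero _
  -- star c = c⁻¹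
  have hstarc : star c = c⁻¹ := by
    rw [hc_def, ← Complex.exp_neg, Complex.star_def, ← Complex.exp_conj]
    congr 1
    simp only [_root_.map_mul, Complex.conj_I, Complex.conj_ofReal]
    ring
  -- P acts on basis vectors
  have hPvec : ∀ j : Fin d, P *ᵥ (Pi.single j 1 : Fin d → ℂ) = Pi.single (π j) 1 := by
    intro j
    rw [Matrix.mulVec_single_one]
    funext i
    rw [Matrix.col_apply, hP, Pi.single_apply]
  -- key transfer relation
  have key : ∀ m : ℕ, U₁ *ᵥ (Pi.single ((π ^ m) l₀) 1 : Fin d → ℂ)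
      = c • (Pi.single ((π ^ m) l₁) 1 : Fin d → ℂ) := by
    intro m
    induction m with
    | zero => simpa using htransfer
    | succ m ih =>
      have h0 : (π ^ (m + 1)) l₀ = π ((π ^ m) l₀) := by
        rw [pow_succ']; rfl
      have h1 : (π ^ (m + 1)) l₁ = π ((π ^ m) l₁) := by
        rw [pow_succ']; rfl
      rw [h0, h1, ← hPvec, Matrix.mulVec_mulVec, hcomm, ← Matrix.mulVec_mulVec, ih,
        Matrix.mulVec_smul, hPvec]
  -- adjoint transfer relation
  have hsU : U₁ᴴ * U₁ = 1 := by
    have := hU₁.1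
    rwa [Matrix.star_eq_conjTranspose] at this
  have keyAdj : ∀ m : ℕ, U₁ᴴ *ᵥ (Pi.single ((π ^ m) l₁) 1 : Fin d → ℂ)
      = c⁻¹ • (Pi.single ((π ^ m) l₀) 1 : Fin d → ℂ) := by
    intro m
    have h := congrArg (fun v => U₁ᴴ *ᵥ v) (key m)
    simp only [Matrix.mulVec_mulVec, Matrix.mulVec_smul, hsU, Matrix.one_mulVec] at h
    calc U₁ᴴ *ᵥ (Pi.single ((π ^ m) l₁) 1 : Fin d → ℂ)
        = c⁻¹ • (c • (U₁ᴴ *ᵥ (Pi.single ((π ^ m) l₁) 1 : Fin d → ℂ))) := by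
          rw [smul_smul, inv_mul_cancel₀ hc, one_smul]
      _ = c⁻¹ • (Pi.single ((π ^ m) l₀) 1 : Fin d → ℂ) := by rw [← h]
  -- orbit facts
  obtain ⟨hfix₀, hinj₀⟩ := orbit_facts π l₀ Ω₀ d₀ hd₀ hd₀pos hcyc₀
  obtain ⟨hfix₁, hinj₁⟩ := orbit_facts π l₁ Ω₁ d₀ hd₁ hd₀pos hcyc₁
  constructor
  · -- span statement
    rw [Submodule.map_span]
    apply le_antisymm
    · rw [Submodule.span_le]
      rintro _ ⟨_, ⟨k, hk, rfl⟩, rfl⟩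
      obtain ⟨m, rfl⟩ := (hcyc₀ k).1 hk
      rw [Matrix.mulVecLin_apply, key m]
      exact Submodule.smul_mem _ _ (Submodule.subset_span ⟨_, (hcyc₁ _).2 ⟨m, rfl⟩, rfl⟩)
    · rw [Submodule.span_le]
      rintro _ ⟨k, hk, rfl⟩
      obtain ⟨m, rfl⟩ := (hcyc₁ k).1 hk
      have : (Pi.single ((π ^ m) l₁) 1 : Fin d → ℂ)
          = c⁻¹ • (U₁.mulVecLin (Pi.single ((π ^ m) l₀) 1)) := by
        rw [Matrix.mulVecLin_apply, key m, smul_smul, inv_mul_cancel₀ hc, one_smul]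
      have hmem : c⁻¹ • (U₁.mulVecLin (Pi.single ((π ^ m) l₀) 1)) ∈
          Submodule.span ℂ (⇑U₁.mulVecLin '' ((fun k => Pi.single k (1 : ℂ)) '' ↑Ω₀)) :=
        Submodule.smul_mem _ _ (Submodule.subset_span
          ⟨_, ⟨_, (hcyc₀ _).2 ⟨m, rfl⟩, rfl⟩, rfl⟩)
      show (Pi.single ((π ^ m) l₁) (1 : ℂ) : Fin d → ℂ) ∈
        (Submodule.span ℂ (⇑U₁.mulVecLin '' ((fun k => Pi.single k (1 : ℂ)) '' ↑Ω₀)) :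
          Set (Fin d → ℂ))
      rw [this]
      exact hmem
  · -- W statement
    set M : Matrix (Fin d) (Fin d) ℂ := c •
        (∑ j ∈ Finset.range d₀,
          Matrix.vecMulVec (Pi.single ((π ^ j) l₁) (1 : ℂ))
            (Pi.single ((π ^ j) l₀) (1 : ℂ))) with hM_def
    refine ⟨U₁ - M, by rw [add_sub_cancel], ?_, ?_⟩
    · intro k hk
      obtain ⟨m, rfl⟩ := (hcyc₀ k).1 hk
      have hMv : M *ᵥ (Pi.single ((π ^ m) l₀) 1 : Fin d → ℂ)
          = c • (Pi.single ((π ^ m) l₁) 1 : Fin d → ℂ) := by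
        rw [hM_def, Matrix.smul_mulVec, sum_mulVec']
        congr 1
        calc ∑ j ∈ Finset.range d₀,
              Matrix.vecMulVec (Pi.single ((π ^ j) l₁) (1 : ℂ))
                (Pi.single ((π ^ j) l₀) (1 : ℂ)) *ᵥ (Pi.single ((π ^ m) l₀) 1 : Fin d → ℂ)
            = ∑ j ∈ Finset.range d₀,
              (if (π ^ j) l₀ = (π ^ m) l₀ then (1 : ℂ) else 0) •
                (Pi.single ((π ^ j) l₁) (1 : ℂ) : Fin d → ℂ) := by
              refine Finset.sum_congr rfl fun j _ => ?_
              rw [vecMulVec_mulVec', single_dotProduct, one_mul, Pi.single_apply]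
          _ = Pi.single ((π ^ m) l₁) 1 := sum_pick π l₀ l₁ hd₀pos hfix₀ hfix₁ hinj₀ m
      rw [Matrix.sub_mulVec, key m, hMv, sub_self]
    · intro k hk
      obtain ⟨m, rfl⟩ := (hcyc₁ k).1 hk
      have hMH : Mᴴ = c⁻¹ •
          (∑ j ∈ Finset.range d₀,
            Matrix.vecMulVec (Pi.single ((π ^ j) l₀) (1 : ℂ))
              (Pi.single ((π ^ j) l₁) (1 : ℂ))) := by
        rw [hM_def, Matrix.conjTranspose_smul, Matrix.conjTranspose_sum, ← hstarc]
        congr 1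
        refine Finset.sum_congr rfl fun j _ => ?_
        ext i i'
        simp [Matrix.conjTranspose_apply, Matrix.vecMulVec_apply, Pi.single_apply,
          apply_ite (star : ℂ → ℂ), mul_comm]
      have hMHv : Mᴴ *ᵥ (Pi.single ((π ^ m) l₁) 1 : Fin d → ℂ)
          = c⁻¹ • (Pi.single ((π ^ m) l₀) 1 : Fin d → ℂ) := by
        rw [hMH, Matrix.smul_mulVec, sum_mulVec']
        congr 1
        calc ∑ j ∈ Finset.range d₀,
              Matrix.vecMulVec (Pi.single ((π ^ j) l₀) (1 : ℂ))
                (Pi.single ((π ^ j) l₁) (1 : ℂ)) *ᵥ (Pi.single ((π ^ m) l₁) 1 : Fin d → ℂ)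
            = ∑ j ∈ Finset.range d₀,
              (if (π ^ j) l₁ = (π ^ m) l₁ then (1 : ℂ) else 0) •
                (Pi.single ((π ^ j) l₀) (1 : ℂ) : Fin d → ℂ) := by
              refine Finset.sum_congr rfl fun j _ => ?_
              rw [vecMulVec_mulVec', single_dotProduct, one_mul, Pi.single_apply]
          _ = Pi.single ((π ^ m) l₀) 1 := sum_pick π l₁ l₀ hd₀pos hfix₁ hfix₀ hinj₁ m
      rw [Matrix.conjTranspose_sub, Matrix.sub_mulVec, keyAdj m, hMHv, sub_self]
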